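/- Let X ∈ R^{n×p} and A_0 ∈ R^{p×T}, and let c > 0. Then inf over all A ∈ R^{p×T} of ‖XA − XA_0‖² + c·rank(A) equals inf over integers r ≥ 0 of ∑_{k ≥ r+1} σ_k(XA_0)² + c·r. -/

import Mathlib

open Matrix BigOperators

/-- Negated unsorted singular values of `M` (square roots of eigenvalues of `Mᴴ * M`). -/
noncomputable def negSvalsUnsorted {m n : ℕ} (M : Matrix (Fin m) (Fin n) ℝ) : Fin n → ℝ :=
  fun i => - Real.sqrt ((show (Mᵀ * M).IsHermitian by simpa [Matrix.conjTranspose_eq_transpose_of_trivial] using Matrix.isHermitian_conjTranspose_mul_self M).eigenvalues i)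

/-- The `k`-th largest singular value of `M` (`k` is 0-indexed, so `svals M 0 = σ₁(M)`). -/
noncomputable def svals {m n : ℕ} (M : Matrix (Fin m) (Fin n) ℝ) : Fin n → ℝ :=
  fun k => - negSvalsUnsorted M (Tuple.sort (negSvalsUnsorted M) k)

/-- The nuclear norm of `M`: sum of the singular values. -/
noncomputable def nucNorm {m n : ℕ} (M : Matrix (Fin m) (Fin n) ℝ) : ℝ := ∑ k, svals M k

/-- The Frobenius (Hilbert–Schmidt) norm of `M`. -/
noncomputable def frobNorm {m n : ℕ} (M : Matrix (Fin m) (Fin n) ℝ) : ℝ :=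
  Real.sqrt (∑ i, ∑ j, (M i j)^2)



section EckartYoungAux
open Finset Submodule

namespace EY

variable {n T : ℕ}

/-- abbreviation for eigenvalues of `Mᴴ * M` -/
noncomputable def ev (M : Matrix (Fin n) (Fin T) ℝ) : Fin T → ℝ :=
  (show (Mᵀ * M).IsHermitian by simpa [Matrix.conjTranspose_eq_transpose_of_trivial] using Matrix.isHermitian_conjTranspose_mul_self M).eigenvalues

/-- the sorting permutation -/
noncomputable def sp (M : Matrix (Fin n) (Fin T) ℝ) : Equiv.Perm (Fin T) :=
  Tuple.sort (negSvalsUnsorted M)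

lemma ev_nonneg (M : Matrix (Fin n) (Fin T) ℝ) (k : Fin T) : 0 ≤ ev M k := by
  have h : (Mᵀ * M).PosSemidef := by
    simpa [Matrix.conjTranspose_eq_transpose_of_trivial] using Matrix.posSemidef_conjTranspose_mul_self M
  exact h.eigenvalues_nonneg k

lemma svals_sq (M : Matrix (Fin n) (Fin T) ℝ) (k : Fin T) :
    svals M k ^ 2 = ev M (sp M k) := by
  simp only [svals, negSvalsUnsorted, neg_neg, sp]
  exact Real.sq_sqrt (ev_nonneg M _)

lemma ev_sp_antitone (M : Matrix (Fin n) (Fin T) ℝ) :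
    Antitone (fun k => ev M (sp M k)) := by
  have h := Tuple.monotone_sort (negSvalsUnsorted M)
  intro a b hab
  have h2 := h hab
  simp only [Function.comp_apply, negSvalsUnsorted, neg_le_neg_iff] at h2
  have h3 : Real.sqrt (ev M (sp M b)) ≤ Real.sqrt (ev M (sp M a)) := h2
  simp only []
  nlinarith [Real.sq_sqrt (ev_nonneg M (sp M a)), Real.sq_sqrt (ev_nonneg M (sp M b)),
    Real.sqrt_nonneg (ev M (sp M a)), Real.sqrt_nonneg (ev M (sp M b))]

lemma frobNorm_sq (C : Matrix (Fin n) (Fin T) ℝ) :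
    frobNorm C ^ 2 = ∑ i, ∑ j, (C i j)^2 := by
  exact Real.sq_sqrt (by positivity)

lemma trace_transpose_mul_self (C : Matrix (Fin n) (Fin T) ℝ) :
    trace (Cᵀ * C) = ∑ i, ∑ j, (C i j)^2 := by
  simp only [trace, Matrix.diag, mul_apply, transpose_apply]
  rw [Finset.sum_comm]
  simp [sq]

lemma trace_transpose_mul_self_nonneg (C : Matrix (Fin n) (Fin T) ℝ) :
    0 ≤ trace (Cᵀ * C) := by
  rw [trace_transpose_mul_self]; positivity

end EY


namespace EY

lemma card_filter_lt {T : ℕ} (s : ℕ) (h : s ≤ T) :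
    (Finset.univ.filter (fun k : Fin T => (k : ℕ) < s)).card = s := by
  rw [show (Finset.univ.filter (fun k : Fin T => (k : ℕ) < s))
      = Finset.map (Fin.castLEEmb h) Finset.univ from ?_]
  · simp
  · ext k
    simp only [mem_filter, mem_univ, true_and, Finset.mem_map, Fin.castLEEmb]
    constructor
    · intro hk; exact ⟨⟨(k : ℕ), hk⟩, by simp [Fin.castLE, Fin.ext_iff]⟩
    · rintro ⟨j, _, rfl⟩; simpa using j.2

/-- Abstract majorization: antitone nonneg weights against `[0,1]`-valued `t` summing `≤ s`. -/
lemma maj {T : ℕ} (μ t : Fin T → ℝ) (hμa : Antitone μ) (hμ0 : ∀ k, 0 ≤ μ k)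
    (ht0 : ∀ k, 0 ≤ t k) (ht1 : ∀ k, t k ≤ 1) (s : ℕ) (hts : ∑ k, t k ≤ s) :
    ∑ k, μ k * t k ≤ ∑ k ∈ Finset.univ.filter (fun k : Fin T => (k : ℕ) < s), μ k := by
  by_cases h : s < T
  · set S₁ := Finset.univ.filter (fun k : Fin T => (k : ℕ) < s) with hS₁
    set S₂ := Finset.univ.filter (fun k : Fin T => ¬ (k : ℕ) < s) with hS₂
    set i₀ : Fin T := ⟨s, h⟩
    set b := μ i₀ with hb
    have hb0 : 0 ≤ b := hμ0 _
    have hsplit : ∑ k, μ k * t k = ∑ k ∈ S₁, μ k * t k + ∑ k ∈ S₂, μ k * t k :=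
      (Finset.sum_filter_add_sum_filter_not _ _ _).symm
    have htsplit : ∑ k ∈ S₁, t k + ∑ k ∈ S₂, t k = ∑ k, t k :=
      Finset.sum_filter_add_sum_filter_not _ _ _
    have hcard : (S₁.card : ℝ) = s := by rw [hS₁, card_filter_lt s h.le]
    have h2 : ∑ k ∈ S₂, μ k * t k ≤ b * ∑ k ∈ S₂, t k := by
      rw [Finset.mul_sum]
      apply Finset.sum_le_sum
      intro k hk
      have hk' : ¬ (k : ℕ) < s := by simpa [hS₂] using hk
      have : i₀ ≤ k := by
        rw [Fin.le_def]; exact le_of_not_gt hk'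
      exact mul_le_mul_of_nonneg_right (hμa this) (ht0 k)
    have h3 : b * ∑ k ∈ S₂, t k ≤ b * ((s : ℝ) - ∑ k ∈ S₁, t k) := by
      apply mul_le_mul_of_nonneg_left _ hb0
      linarith
    have h4 : ∑ k ∈ S₁, b * (1 - t k) = b * ((s : ℝ) - ∑ k ∈ S₁, t k) := by
      simp only [mul_sub, mul_one]
      rw [Finset.sum_sub_distrib, Finset.sum_const, nsmul_eq_mul, hcard, ← Finset.mul_sum]
      ring
    have h5 : ∑ k ∈ S₁, b * (1 - t k) ≤ ∑ k ∈ S₁, μ k * (1 - t k) := by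
      apply Finset.sum_le_sum
      intro k hk
      have hk' : (k : ℕ) < s := by simpa [hS₁] using hk
      have : k ≤ i₀ := by rw [Fin.le_def]; exact hk'.le
      exact mul_le_mul_of_nonneg_right (hμa this) (by linarith [ht1 k])
    have h6 : ∑ k ∈ S₁, μ k * t k + ∑ k ∈ S₁, μ k * (1 - t k) = ∑ k ∈ S₁, μ k := by
      rw [← Finset.sum_add_distrib]; apply Finset.sum_congr rfl; intro k _; ring
    linarith
  · have : Finset.univ.filter (fun k : Fin T => (k : ℕ) < s) = Finset.univ := by
      ext k; simp only [mem_filter, mem_univ, true_and, iff_true]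
      exact lt_of_lt_of_le k.2 (le_of_not_gt h)
    rw [this]
    apply Finset.sum_le_sum
    intro k _
    nlinarith [hμ0 k, ht0 k, ht1 k]

end EY


namespace EY

variable {n T : ℕ}

lemma exists_row_orthonormal (B : Matrix (Fin n) (Fin T) ℝ) :
    ∃ Q : Matrix (Fin B.rank) (Fin T) ℝ, Q * Qᵀ = 1 ∧ B * (Qᵀ * Q) = B := by
  classical
  set e : EuclideanSpace ℝ (Fin T) ≃ₗ[ℝ] (Fin T → ℝ) := WithLp.linearEquiv 2 ℝ (Fin T → ℝ)
  set W : Submodule ℝ (EuclideanSpace ℝ (Fin T)) :=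
    (Submodule.span ℝ (Set.range B)).map ((e.symm : (Fin T → ℝ) ≃ₗ[ℝ] EuclideanSpace ℝ (Fin T)) : (Fin T → ℝ) →ₗ[ℝ] EuclideanSpace ℝ (Fin T)) with hW
  have hfr : Module.finrank ℝ W = B.rank := by
    rw [hW]
    rw [LinearEquiv.finrank_map_eq e.symm (span ℝ (Set.range B)), B.rank_eq_finrank_span_row]
    rfl
  set ob : OrthonormalBasis (Fin B.rank) ℝ W :=
    (stdOrthonormalBasis ℝ W).reindex (finCongr hfr) with hob
  set Q : Matrix (Fin B.rank) (Fin T) ℝ := fun i => e ((ob i : EuclideanSpace ℝ (Fin T))) with hQ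
  refine ⟨Q, ?_, ?_⟩
  · ext i i'
    have horm := ob.orthonormal
    rw [orthonormal_iff_ite] at horm
    have h1 : (inner ℝ (ob i) (ob i') : ℝ) = ∑ x, Q i x * Q i' x := by
      rw [Submodule.coe_inner, PiLp.inner_apply]
      simp [hQ, RCLike.inner_apply, WithLp.linearEquiv, e]
      exact Finset.sum_congr rfl (fun _ _ => mul_comm _ _)
    have := horm i i'
    rw [h1] at this
    simp only [Matrix.mul_apply, transpose_apply, Matrix.one_apply]
    rw [this]
  · ext i x
    have hbmem : e.symm (B i) ∈ W := by
      rw [hW]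
      exact Submodule.mem_map_of_mem (subset_span ⟨i, rfl⟩)
    set bW : W := ⟨e.symm (B i), hbmem⟩ with hbW
    have hrep := ob.sum_repr' bW
    -- coe to EuclideanSpace and apply e, evaluate at x
    have hrep2 : ∑ j, (inner ℝ (ob j) bW : ℝ) • ((ob j : EuclideanSpace ℝ (Fin T))) =
        e.symm (B i) := by
      have := congrArg (Subtype.val) hrep
      simpa using this
    have hrep3 : ∑ j, (inner ℝ (ob j) bW : ℝ) * Q j x = B i x := by
      have := congrArg (fun v => e v x) hrep2
      simp only [map_sum, _root_.map_smul] at this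
      simpa [hQ] using this
    have hinner : ∀ j, (inner ℝ (ob j) bW : ℝ) = ∑ y, Q j y * B i y := by
      intro j
      rw [Submodule.coe_inner, PiLp.inner_apply]
      simp [hQ, hbW, RCLike.inner_apply, WithLp.linearEquiv, e]
      exact Finset.sum_congr rfl (fun _ _ => mul_comm _ _)
    rw [Matrix.mul_apply]
    simp only [Matrix.mul_apply, transpose_apply]
    rw [← hrep3]
    simp only [hinner, Finset.sum_mul, Finset.mul_sum]
    rw [Finset.sum_comm]
    apply Finset.sum_congr rfl
    intro j _
    apply Finset.sum_congr rfl
    intro y _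
    ring

end EY

namespace EY

variable {n T : ℕ}

lemma trace_proj_ineq (C P : Matrix (Fin T) (Fin T) ℝ) : True := trivial

lemma trace_sub_proj_right (C P : Matrix (Fin n) (Fin T) ℝ) : True := trivial

lemma trace_split (C : Matrix (Fin n) (Fin T) ℝ) (P : Matrix (Fin T) (Fin T) ℝ)
    (hPt : Pᵀ = P) (hPP : P * P = P) :
    trace ((C - C * P)ᵀ * (C - C * P)) = trace (Cᵀ * C) - trace ((C * P)ᵀ * (C * P)) := by
  have h1 : (C - C * P)ᵀ * (C - C * P)
      = Cᵀ * C - P * (Cᵀ * C) - (Cᵀ * C) * P + P * (Cᵀ * C) * P := by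
    simp only [transpose_sub, transpose_mul, hPt, Matrix.sub_mul, Matrix.mul_sub,
      Matrix.mul_assoc]
    abel
  have h2 : (C * P)ᵀ * (C * P) = P * (Cᵀ * C) * P := by
    rw [transpose_mul, hPt]; simp only [Matrix.mul_assoc]
  rw [h1, h2, trace_add, trace_sub, trace_sub]
  have e1 : trace (P * (Cᵀ * C)) = trace ((Cᵀ * C) * P) := Matrix.trace_mul_comm _ _
  have e2 : trace (P * (Cᵀ * C) * P) = trace ((Cᵀ * C) * P) := by
    rw [Matrix.trace_mul_comm (P * (Cᵀ * C)) P, ← Matrix.mul_assoc, hPP,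
      Matrix.trace_mul_comm]
  rw [e1, e2]; ring

lemma trace_sub_proj (M : Matrix (Fin n) (Fin T) ℝ) (P : Matrix (Fin T) (Fin T) ℝ)
    (hPt : Pᵀ = P) (hPP : P * P = P) :
    trace ((M * P - M)ᵀ * (M * P - M)) = trace (Mᵀ * M) - trace ((Mᵀ * M) * P) := by
  have h1 : (M * P - M)ᵀ * (M * P - M)
      = P * (Mᵀ * M) * P - P * (Mᵀ * M) - (Mᵀ * M) * P + Mᵀ * M := by
    simp only [transpose_sub, transpose_mul, hPt, Matrix.sub_mul, Matrix.mul_sub,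
      Matrix.mul_assoc]
    abel
  rw [h1, trace_add, trace_sub, trace_sub]
  have e1 : trace (P * (Mᵀ * M)) = trace ((Mᵀ * M) * P) := Matrix.trace_mul_comm _ _
  have e2 : trace (P * (Mᵀ * M) * P) = trace ((Mᵀ * M) * P) := by
    rw [Matrix.trace_mul_comm (P * (Mᵀ * M)) P, ← Matrix.mul_assoc, hPP,
      Matrix.trace_mul_comm]
  rw [e1, e2]; ring

lemma spectral (M : Matrix (Fin n) (Fin T) ℝ) :
    Mᵀ * M = ((show (Mᵀ * M).IsHermitian by simpa [Matrix.conjTranspose_eq_transpose_of_trivial] using Matrix.isHermitian_conjTranspose_mul_self M).eigenvectorUnitary :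
        Matrix (Fin T) (Fin T) ℝ) * diagonal (ev M) *
      ((show (Mᵀ * M).IsHermitian by simpa [Matrix.conjTranspose_eq_transpose_of_trivial] using Matrix.isHermitian_conjTranspose_mul_self M).eigenvectorUnitary :
        Matrix (Fin T) (Fin T) ℝ)ᵀ := by
  have hMT : Mᴴ = Mᵀ := by simp
  simpa [ev, Matrix.star_eq_conjTranspose] using (show (Mᵀ * M).IsHermitian by simpa [Matrix.conjTranspose_eq_transpose_of_trivial] using Matrix.isHermitian_conjTranspose_mul_self M).spectral_theorem

lemma ey_lower (M B : Matrix (Fin n) (Fin T) ℝ) :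
    ∑ k ∈ Finset.univ.filter (fun k : Fin T => B.rank ≤ (k : ℕ)), svals M k ^ 2
      ≤ frobNorm (B - M) ^ 2 := by
  classical
  obtain ⟨Q, hQQ, hBQ⟩ := exists_row_orthonormal B
  set P : Matrix (Fin T) (Fin T) ℝ := Qᵀ * Q with hP
  have hPt : Pᵀ = P := by rw [hP, transpose_mul, transpose_transpose]
  have hPP : P * P = P := by
    rw [hP, Matrix.mul_assoc, ← Matrix.mul_assoc Q Qᵀ Q, hQQ, Matrix.one_mul]
  set V : Matrix (Fin T) (Fin T) ℝ :=
    ((show (Mᵀ * M).IsHermitian by simpa [Matrix.conjTranspose_eq_transpose_of_trivial] using Matrix.isHermitian_conjTranspose_mul_self M).eigenvectorUnitary : Matrix (Fin T) (Fin T) ℝ)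
    with hV
  have hUmem := ((show (Mᵀ * M).IsHermitian by simpa [Matrix.conjTranspose_eq_transpose_of_trivial] using Matrix.isHermitian_conjTranspose_mul_self M).eigenvectorUnitary).2
  have hVtV : Vᵀ * V = 1 := by
    have h := (Matrix.mem_unitaryGroup_iff').mp hUmem
    rw [Matrix.star_eq_conjTranspose] at h
    simpa [hV] using h
  have hVVt : V * Vᵀ = 1 := by
    have h := (Matrix.mem_unitaryGroup_iff).mp hUmem
    rw [Matrix.star_eq_conjTranspose] at h
    simpa [hV] using h
  have hSpec : Mᵀ * M = V * diagonal (ev M) * Vᵀ := spectral M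
  -- step 1
  have key1 : trace (((B - M) - (B - M) * P)ᵀ * ((B - M) - (B - M) * P))
      ≤ frobNorm (B - M) ^ 2 := by
    rw [frobNorm_sq, ← trace_transpose_mul_self, trace_split (B - M) P hPt hPP]
    linarith [trace_transpose_mul_self_nonneg ((B - M) * P)]
  -- step 2
  have key2 : (B - M) - (B - M) * P = M * P - M := by
    rw [Matrix.sub_mul, hBQ]
    abel
  have key3 := trace_sub_proj M P hPt hPP
  -- the t vector
  set t : Fin T → ℝ := fun j => (Vᵀ * P * V) j j with ht
  have ht0 : ∀ j, 0 ≤ t j := by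
    intro j
    have h' : (Vᵀ * P * V) j j = ∑ i, ((Q * V) i j) ^ 2 := by
      rw [show Vᵀ * P * V = (Q * V)ᵀ * (Q * V) by
        rw [hP, transpose_mul]; simp only [Matrix.mul_assoc]]
      rw [Matrix.mul_apply]
      apply Finset.sum_congr rfl; intro i _
      rw [transpose_apply, sq]
    show 0 ≤ (Vᵀ * P * V) j j
    rw [h']; positivity
  have htsum : ∑ j, t j = (B.rank : ℝ) := by
    have h1 : ∑ j, t j = trace (Vᵀ * P * V) := by simp [trace, Matrix.diag, ht]
    rw [h1, Matrix.trace_mul_comm, ← Matrix.mul_assoc, hVVt, Matrix.one_mul, hP,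
      Matrix.trace_mul_comm, hQQ]
    simp [trace]
  have ht1 : ∀ j, t j ≤ 1 := by
    intro j
    have hu : t j = ∑ x, ((P * V) x j) ^ 2 := by
      have h' : (Vᵀ * P * V) j j = ((P * V)ᵀ * (P * V)) j j := by
        rw [show (P * V)ᵀ * (P * V) = Vᵀ * (Pᵀ * P) * V by
          rw [transpose_mul]; simp only [Matrix.mul_assoc]]
        rw [hPt, hPP]
      show (Vᵀ * P * V) j j = _
      rw [h', Matrix.mul_apply]
      apply Finset.sum_congr rfl; intro x _
      rw [transpose_apply, sq]
    have hv : ∑ x, (V x j) ^ 2 = 1 := by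
      have h' : (Vᵀ * V) j j = (1 : Matrix (Fin T) (Fin T) ℝ) j j := by rw [hVtV]
      simp only [mul_apply, transpose_apply, Matrix.one_apply_eq] at h'
      simpa [sq] using h'
    have htj : t j = ∑ x, V x j * ((P * V) x j) := by
      show (Vᵀ * P * V) j j = _
      rw [Matrix.mul_assoc, Matrix.mul_apply]
      apply Finset.sum_congr rfl; intro x _
      rw [transpose_apply]
    have hcs := Finset.sum_mul_sq_le_sq_mul_sq Finset.univ
      (fun x => V x j) (fun x => (P * V) x j)
    rw [← htj, hv, ← hu] at hcs
    nlinarith [ht0 j]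
  have htrS : trace (Mᵀ * M) = ∑ j, ev M j := by
    rw [hSpec, Matrix.trace_mul_comm, ← Matrix.mul_assoc, hVtV, Matrix.one_mul]
    simp [trace_diagonal]
  have htrSP : trace ((Mᵀ * M) * P) = ∑ j, ev M j * t j := by
    rw [hSpec]
    rw [show V * diagonal (ev M) * Vᵀ * P = V * (diagonal (ev M) * (Vᵀ * P)) by
      simp only [Matrix.mul_assoc]]
    rw [Matrix.trace_mul_comm]
    rw [show diagonal (ev M) * (Vᵀ * P) * V = diagonal (ev M) * (Vᵀ * P * V) by
      simp only [Matrix.mul_assoc]]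
    simp only [trace, Matrix.diag, diagonal_mul, ht]
  have hmaj : ∑ j, ev M j * t j
      ≤ ∑ k ∈ Finset.univ.filter (fun k : Fin T => (k : ℕ) < B.rank), ev M (sp M k) := by
    have hre : ∑ j, ev M j * t j = ∑ k, ev M (sp M k) * t (sp M k) :=
      (Equiv.sum_comp (sp M) (fun j => ev M j * t j)).symm
    rw [hre]
    apply maj (fun k => ev M (sp M k)) (fun k => t (sp M k)) (ev_sp_antitone M)
      (fun k => ev_nonneg M _) (fun k => ht0 _) (fun k => ht1 _) B.rank
    rw [Equiv.sum_comp (sp M) t, htsum]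
  have hsplit : ∑ k ∈ Finset.univ.filter (fun k : Fin T => (k : ℕ) < B.rank), ev M (sp M k)
      + ∑ k ∈ Finset.univ.filter (fun k : Fin T => B.rank ≤ (k : ℕ)), ev M (sp M k)
      = ∑ j, ev M j := by
    rw [show Finset.univ.filter (fun k : Fin T => B.rank ≤ (k : ℕ))
        = Finset.univ.filter (fun k : Fin T => ¬ (k : ℕ) < B.rank) by
      apply Finset.filter_congr; intro k _; simp [not_lt]]
    rw [Finset.sum_filter_add_sum_filter_not]
    exact Equiv.sum_comp (sp M) (ev M)
  have hgoal_lhs :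
      ∑ k ∈ Finset.univ.filter (fun k : Fin T => B.rank ≤ (k : ℕ)), svals M k ^ 2
      = ∑ k ∈ Finset.univ.filter (fun k : Fin T => B.rank ≤ (k : ℕ)), ev M (sp M k) := by
    apply Finset.sum_congr rfl; intro k _; exact svals_sq M k
  rw [hgoal_lhs]
  rw [key2, key3] at key1
  rw [htrS, htrSP] at key1
  linarith

end EY

namespace EY

variable {n p T : ℕ}

lemma card_filter_lt_le (r : ℕ) :
    (Finset.univ.filter (fun k : Fin T => (k : ℕ) < r)).card ≤ r := by
  calc (Finset.univ.filter (fun k : Fin T => (k : ℕ) < r)).card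
      ≤ (Finset.range r).card := Finset.card_le_card_of_injOn (fun k : Fin T => (k : ℕ))
        (fun k hk => Finset.mem_range.mpr (by simpa using (Finset.mem_filter.mp hk).2))
        (fun a _ b _ hab => Fin.ext hab)
    _ = r := Finset.card_range r

lemma ey_achieve (X : Matrix (Fin n) (Fin p) ℝ) (A₀ : Matrix (Fin p) (Fin T) ℝ) (r : ℕ) :
    ∃ A : Matrix (Fin p) (Fin T) ℝ, A.rank ≤ r ∧
      frobNorm (X * A - X * A₀) ^ 2
        = ∑ k ∈ Finset.univ.filter (fun k : Fin T => r ≤ (k : ℕ)), svals (X * A₀) k ^ 2 := by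
  classical
  set M : Matrix (Fin n) (Fin T) ℝ := X * A₀ with hM
  set V : Matrix (Fin T) (Fin T) ℝ :=
    ((show (Mᵀ * M).IsHermitian by simpa [Matrix.conjTranspose_eq_transpose_of_trivial] using Matrix.isHermitian_conjTranspose_mul_self M).eigenvectorUnitary : Matrix (Fin T) (Fin T) ℝ)
    with hV
  have hUmem := ((show (Mᵀ * M).IsHermitian by simpa [Matrix.conjTranspose_eq_transpose_of_trivial] using Matrix.isHermitian_conjTranspose_mul_self M).eigenvectorUnitary).2
  have hVtV : Vᵀ * V = 1 := by
    have h := (Matrix.mem_unitaryGroup_iff').mp hUmem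
    rw [Matrix.star_eq_conjTranspose] at h
    simpa [hV] using h
  have hVVt : V * Vᵀ = 1 := by
    have h := (Matrix.mem_unitaryGroup_iff).mp hUmem
    rw [Matrix.star_eq_conjTranspose] at h
    simpa [hV] using h
  have hSpec : Mᵀ * M = V * diagonal (ev M) * Vᵀ := spectral M
  set σ : Equiv.Perm (Fin T) := sp M with hσ
  set d : Fin T → ℝ := fun j => if ((σ.symm j : ℕ) < r) then 1 else 0 with hd
  set e : Fin T → ℝ := fun j => d j - 1 with he
  refine ⟨A₀ * (V * diagonal d * Vᵀ), ?_, ?_⟩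
  · -- rank bound
    calc (A₀ * (V * diagonal d * Vᵀ)).rank
        ≤ (V * diagonal d * Vᵀ).rank := Matrix.rank_mul_le_right _ _
      _ ≤ (V * diagonal d).rank := Matrix.rank_mul_le_left _ _
      _ ≤ (diagonal d).rank := Matrix.rank_mul_le_right _ _
      _ ≤ r := by
          rw [Matrix.rank_diagonal]
          have h1 : Fintype.card {j // d j ≠ 0}
              = Fintype.card {k : Fin T // (k : ℕ) < r} := by
            apply Fintype.card_congr
            refine (Equiv.subtypeEquiv σ.symm ?_)
            intro j
            simp [hd]
          rw [h1, Fintype.card_subtype]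
          exact card_filter_lt_le r
  · -- frobenius norm computation
    have hXA : X * (A₀ * (V * diagonal d * Vᵀ)) - X * A₀ = M * (V * diagonal e * Vᵀ) := by
      rw [← Matrix.mul_assoc, ← hM]
      have hE : diagonal e = diagonal d - 1 := by
        ext j k
        by_cases hjk : j = k <;> simp [Matrix.diagonal_apply, Matrix.one_apply, hjk, he]
      rw [hE, Matrix.mul_sub, Matrix.sub_mul, Matrix.mul_sub, Matrix.mul_one, hVVt,
        Matrix.mul_one]
    rw [hXA, frobNorm_sq, ← trace_transpose_mul_self]
    have hNt : (M * (V * diagonal e * Vᵀ))ᵀ * (M * (V * diagonal e * Vᵀ))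
        = (V * diagonal e * Vᵀ)ᵀ * (Mᵀ * M) * (V * diagonal e * Vᵀ) := by
      rw [transpose_mul]
      simp only [Matrix.mul_assoc]
    rw [hNt, hSpec]
    have hEt : (V * diagonal e * Vᵀ)ᵀ = V * diagonal e * Vᵀ := by
      rw [transpose_mul, transpose_mul, diagonal_transpose, transpose_transpose]
      simp only [Matrix.mul_assoc]
    rw [hEt]
    have hVt : ∀ Z : Matrix (Fin T) (Fin T) ℝ, Vᵀ * (V * Z) = Z := by
      intro Z
      rw [← Matrix.mul_assoc, hVtV, Matrix.one_mul]
    have hcollapse : V * diagonal e * Vᵀ * (V * diagonal (ev M) * Vᵀ) * (V * diagonal e * Vᵀ)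
        = V * (diagonal e * diagonal (ev M) * diagonal e) * Vᵀ := by
      simp only [Matrix.mul_assoc]
      rw [hVt, hVt]
    rw [hcollapse]
    rw [Matrix.trace_mul_comm, ← Matrix.mul_assoc, ← Matrix.mul_assoc, hVtV, Matrix.one_mul]
    rw [diagonal_mul_diagonal, diagonal_mul_diagonal, trace_diagonal]
    -- now: ∑ j, e j * ev M j * e j = tail sum
    have hterm : ∀ j, e j * ev M j * e j
        = if ((σ.symm j : ℕ) < r) then 0 else ev M j := by
      intro j
      by_cases hj : ((σ.symm j : ℕ) < r) <;> simp [he, hd, hj]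
    rw [Finset.sum_congr rfl (fun j _ => hterm j)]
    have hstep : ∑ j, (if ((σ.symm j : ℕ) < r) then (0:ℝ) else ev M j)
        = ∑ j ∈ Finset.univ.filter (fun j : Fin T => ¬ ((σ.symm j : ℕ) < r)), ev M j := by
      rw [Finset.sum_filter]
      apply Finset.sum_congr rfl
      intro j _
      by_cases hj : ((σ.symm j : ℕ) < r) <;> simp [hj]
    rw [hstep]
    have hre : ∑ k ∈ Finset.univ.filter (fun k : Fin T => r ≤ (k : ℕ)), ev M (σ k)
        = ∑ j ∈ Finset.univ.filter (fun j : Fin T => ¬ ((σ.symm j : ℕ) < r)), ev M j := by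
      refine Finset.sum_equiv σ ?_ ?_
      · intro k; simp [not_lt]
      · intro k _; rfl
    rw [← hre]
    apply Finset.sum_congr rfl
    intro k _
    exact (svals_sq M k).symm

end EY

end EckartYoungAux

/-- for `X ∈ ℝ^{n×p}`, `A₀ ∈ ℝ^{p×T}` and `c > 0`,
`inf_A {‖XA − XA₀‖² + c·rank A} = inf_r {∑_{k ≥ r+1} σ_k(XA₀)² + c·r}`
(0-indexed: the inner sum runs over indices `k ≥ r`). -/
theorem inf_penalized_rank_eq {n p T : ℕ} (X : Matrix (Fin n) (Fin p) ℝ)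
    (A₀ : Matrix (Fin p) (Fin T) ℝ) (c : ℝ) (hc : 0 < c) :
    sInf {x : ℝ | ∃ A : Matrix (Fin p) (Fin T) ℝ,
        x = frobNorm (X * A - X * A₀) ^ 2 + c * A.rank} =
      sInf {x : ℝ | ∃ r : ℕ,
        x = (∑ k ∈ Finset.univ.filter (fun k : Fin T => r ≤ (k : ℕ)),
              svals (X * A₀) k ^ 2) + c * r} := by
  classical
  set S₁ := {x : ℝ | ∃ A : Matrix (Fin p) (Fin T) ℝ,
      x = frobNorm (X * A - X * A₀) ^ 2 + c * A.rank} with hS₁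
  set S₂ := {x : ℝ | ∃ r : ℕ,
      x = (∑ k ∈ Finset.univ.filter (fun k : Fin T => r ≤ (k : ℕ)),
            svals (X * A₀) k ^ 2) + c * r} with hS₂
  have hS₁ne : S₁.Nonempty := ⟨_, ⟨A₀, rfl⟩⟩
  have hS₂ne : S₂.Nonempty := ⟨_, ⟨0, rfl⟩⟩
  have hbdd₁ : BddBelow S₁ := by
    refine ⟨0, ?_⟩
    rintro x ⟨A, rfl⟩
    have h1 : (0:ℝ) ≤ frobNorm (X * A - X * A₀) ^ 2 := sq_nonneg _
    have h2 : (0:ℝ) ≤ c * A.rank := mul_nonneg hc.le (Nat.cast_nonneg _)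
    linarith
  have hbdd₂ : BddBelow S₂ := by
    refine ⟨0, ?_⟩
    rintro x ⟨r, rfl⟩
    have h1 : (0:ℝ) ≤ ∑ k ∈ Finset.univ.filter (fun k : Fin T => r ≤ (k : ℕ)),
        svals (X * A₀) k ^ 2 := Finset.sum_nonneg (fun k _ => sq_nonneg _)
    have h2 : (0:ℝ) ≤ c * r := mul_nonneg hc.le (Nat.cast_nonneg _)
    linarith
  apply le_antisymm
  · apply le_csInf hS₂ne
    rintro b ⟨r, rfl⟩
    obtain ⟨A, hrank, hfrob⟩ := EY.ey_achieve X A₀ r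
    have hmem : frobNorm (X * A - X * A₀) ^ 2 + c * A.rank ∈ S₁ := ⟨A, rfl⟩
    refine le_trans (csInf_le hbdd₁ hmem) ?_
    rw [hfrob]
    have h3 : (A.rank : ℝ) ≤ (r : ℝ) := Nat.cast_le.mpr hrank
    have := mul_le_mul_of_nonneg_left h3 hc.le
    linarith
  · apply le_csInf hS₁ne
    rintro b ⟨A, rfl⟩
    have hmem : (∑ k ∈ Finset.univ.filter (fun k : Fin T => A.rank ≤ (k : ℕ)),
        svals (X * A₀) k ^ 2) + c * A.rank ∈ S₂ := ⟨A.rank, rfl⟩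
    refine le_trans (csInf_le hbdd₂ hmem) ?_
    have hr : (X * A).rank ≤ A.rank := Matrix.rank_mul_le_right X A
    have h1 : ∑ k ∈ Finset.univ.filter (fun k : Fin T => A.rank ≤ (k : ℕ)),
          svals (X * A₀) k ^ 2
        ≤ ∑ k ∈ Finset.univ.filter (fun k : Fin T => (X * A).rank ≤ (k : ℕ)),
          svals (X * A₀) k ^ 2 := by
      apply Finset.sum_le_sum_of_subset_of_nonneg
      · intro k hk
        simp only [Finset.mem_filter, Finset.mem_univ, true_and] at hk ⊢
        omega
      · intro k _ _; exact sq_nonneg _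
    have h2 := EY.ey_lower (X * A₀) (X * A)
    linarith
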